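/- arXiv:0802.0947 — 4 statements merged into one kernel-verified Lean document; each statement's English description precedes it below -/
import Mathlib

section
/- For the sequence λ_0 = 0, λ_{n+1} = (1/2)(λ_n + sqrt(λ_n^2 + 4)), one has sqrt(n) ≤ λ_n ≤ sqrt(2n) for all n ≥ 0. -/
noncomputable def lam : ℕ → ℝ
  | 0 => 0
  | n + 1 => (lam n + Real.sqrt (lam n ^ 2 + 4)) / 2

lemma lam_key : ∀ n : ℕ, 0 ≤ lam n ∧ (n : ℝ) ≤ lam n ^ 2 ∧ lam n ^ 2 ≤ 2 * n := by
  intro n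
  induction n with
  | zero => simp [lam]
  | succ n ih =>
    obtain ⟨hx0, hlo, hhi⟩ := ih
    set x := lam n with hx
    have hs0 : 0 ≤ Real.sqrt (x ^ 2 + 4) := Real.sqrt_nonneg _
    have hs2 : Real.sqrt (x ^ 2 + 4) ^ 2 = x ^ 2 + 4 := Real.sq_sqrt (by positivity)
    set s := Real.sqrt (x ^ 2 + 4) with hsdef
    have hn0 : (0 : ℝ) ≤ n := Nat.cast_nonneg n
    have hsx : x ≤ s := by nlinarith [sq_nonneg (s - x)]
    have hlam : lam (n + 1) = (x + s) / 2 := rfl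
    refine ⟨by rw [hlam]; positivity, ?_, ?_⟩
    · rw [hlam]
      push_cast
      nlinarith
    · rw [hlam]
      push_cast
      have hb : 0 ≤ 4 * (n : ℝ) + 2 - x ^ 2 := by nlinarith
      have hsq : (x * s) ^ 2 ≤ (4 * (n : ℝ) + 2 - x ^ 2) ^ 2 := by
        have : (x * s) ^ 2 = x ^ 2 * (x ^ 2 + 4) := by ring_nf; nlinarith [hs2]
        nlinarith
      have hxs : x * s ≤ 4 * (n : ℝ) + 2 - x ^ 2 := by
        nlinarith [mul_nonneg hx0 hs0]
      nlinarith

theorem stmt_3 : ∀ n : ℕ, Real.sqrt n ≤ lam n ∧ lam n ≤ Real.sqrt (2 * n) := by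
  intro n
  obtain ⟨hx0, hlo, hhi⟩ := lam_key n
  constructor
  · have := Real.sqrt_le_sqrt hlo
    rwa [Real.sqrt_sq hx0] at this
  · have := Real.sqrt_le_sqrt hhi
    rw [Real.sqrt_sq hx0] at this
    simpa using this
end

section
/- For the sequence λ_0 = 0, λ_{n+1} = (1/2)(λ_n + sqrt(λ_n^2 + 4)), the ratio λ_{n+1}/λ_n (for n ≥ 1) is decreasing in n and converges to 1. -/
lemma lam_nonneg : ∀ n, 0 ≤ lam n := by
  intro n
  induction n with
  | zero => simp [lam]
  | succ n ih =>
    have : 0 ≤ Real.sqrt (lam n ^ 2 + 4) := Real.sqrt_nonneg _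
    simp only [lam]; linarith

lemma lam_lt_succ (n : ℕ) : lam n < lam (n + 1) := by
  have h := lam_nonneg n
  have h1 : lam n < Real.sqrt (lam n ^ 2 + 4) := by
    have : lam n = Real.sqrt (lam n ^ 2) := by
      rw [Real.sqrt_sq h]
    rw [this]
    apply Real.sqrt_lt_sqrt (by positivity)
    nlinarith
  simp only [lam]; linarith

lemma lam_mono : StrictMono lam := strictMono_nat_of_lt_succ lam_lt_succ

lemma lam_succ_pos (n : ℕ) : 0 < lam (n + 1) := by
  have := lam_nonneg n
  have := lam_lt_succ n
  linarith

lemma lam_identity (n : ℕ) : lam (n + 1) ^ 2 = lam n * lam (n + 1) + 1 := by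
  have hs : Real.sqrt (lam n ^ 2 + 4) ^ 2 = lam n ^ 2 + 4 :=
    Real.sq_sqrt (by positivity)
  simp only [lam]
  nlinarith [hs]

lemma lam_ratio (n : ℕ) (hn : 1 ≤ n) :
    lam (n + 1) / lam n = 1 + 1 / (lam n * lam (n + 1)) := by
  obtain ⟨k, rfl⟩ := Nat.exists_eq_add_of_le hn
  have h1 : 0 < lam (1 + k) := by
    have := lam_succ_pos k
    rwa [add_comm]
  have h2 : 0 < lam (1 + k + 1) := lam_succ_pos _
  have hid := lam_identity (1 + k)
  field_simp
  nlinarith [hid]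

lemma lam_sq_ge (n : ℕ) : (n : ℝ) ≤ lam n ^ 2 := by
  induction n with
  | zero => simp [lam]
  | succ n ih =>
    have hid := lam_identity n
    have h1 := lam_nonneg n
    have h2 := lam_lt_succ n
    push_cast
    nlinarith

theorem stmt_5 :
    (∀ m n : ℕ, 1 ≤ m → m ≤ n → lam (n + 1) / lam n ≤ lam (m + 1) / lam m) ∧
    Filter.Tendsto (fun n => lam (n + 1) / lam n) Filter.atTop (nhds 1) := by
  constructor
  · intro m n hm hmn
    have hn : 1 ≤ n := hm.trans hmn
    rw [lam_ratio m hm, lam_ratio n hn]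
    have hmpos : 0 < lam m := by
      have := lam_succ_pos (m - 1); rwa [Nat.sub_add_cancel hm] at this
    have hm1pos : 0 < lam (m + 1) := lam_succ_pos m
    have h1 : lam m ≤ lam n := lam_mono.monotone hmn
    have h2 : lam (m + 1) ≤ lam (n + 1) := lam_mono.monotone (by omega)
    have : lam m * lam (m + 1) ≤ lam n * lam (n + 1) := by
      apply mul_le_mul h1 h2 hm1pos.le (hmpos.le.trans h1)
    have hpos : 0 < lam m * lam (m + 1) := mul_pos hmpos hm1pos
    have := one_div_le_one_div_of_le hpos this
    linarith
  · refine tendsto_of_tendsto_of_tendsto_of_le_of_le'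
      (g := fun _ : ℕ => (1 : ℝ)) (h := fun n : ℕ => 1 + 1 / (n : ℝ))
      tendsto_const_nhds ?_ ?_ ?_
    · have : Filter.Tendsto (fun n : ℕ => 1 + 1 / (n : ℝ)) Filter.atTop (nhds (1 + 0)) :=
        tendsto_const_nhds.add tendsto_one_div_atTop_nhds_zero_nat
      simpa using this
    · filter_upwards [Filter.eventually_atTop.mpr ⟨1, fun n hn => hn⟩] with n hn
      rw [lam_ratio n hn]
      have hnpos : 0 < lam n := by
        have := lam_succ_pos (n - 1); rwa [Nat.sub_add_cancel hn] at this
      have := lam_succ_pos n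
      have : 0 < lam n * lam (n + 1) := mul_pos hnpos this
      have := le_of_lt (one_div_pos.mpr this)
      linarith
    · filter_upwards [Filter.eventually_atTop.mpr ⟨1, fun n hn => hn⟩] with n hn
      rw [lam_ratio n hn]
      have hnpos : 0 < lam n := by
        have := lam_succ_pos (n - 1); rwa [Nat.sub_add_cancel hn] at this
      have hn1 := lam_succ_pos n
      have hge : (n : ℝ) ≤ lam n * lam (n + 1) := by
        have := lam_sq_ge n
        have := (lam_lt_succ n).le
        nlinarith
      have hnp : (0 : ℝ) < n := by exact_mod_cast hn
      have : 1 / (lam n * lam (n + 1)) ≤ 1 / (n : ℝ) :=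
        one_div_le_one_div_of_le hnp hge
      linarith
end

section
/- For the sequence λ_0 = 0, λ_{n+1} = (1/2)(λ_n + sqrt(λ_n^2 + 4)), one has lim_{n→∞} λ_n^2 / n = 2. -/
lemma lam_sq_rec (n : ℕ) :
    lam (n + 1) ^ 2 = (lam n ^ 2 + 2 + Real.sqrt ((lam n ^ 2) ^ 2 + 4 * lam n ^ 2)) / 2 := by
  have h0 := lam_nonneg n
  have hs : Real.sqrt (lam n ^ 2 + 4) ^ 2 = lam n ^ 2 + 4 :=
    Real.sq_sqrt (by positivity)
  have hmul : Real.sqrt ((lam n ^ 2) ^ 2 + 4 * lam n ^ 2)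
      = lam n * Real.sqrt (lam n ^ 2 + 4) := by
    rw [show (lam n ^ 2) ^ 2 + 4 * lam n ^ 2 = lam n ^ 2 * (lam n ^ 2 + 4) by ring,
      Real.sqrt_mul (sq_nonneg _), Real.sqrt_sq h0]
  show ((lam n + Real.sqrt (lam n ^ 2 + 4)) / 2) ^ 2 = _
  rw [hmul]
  nlinarith [hs]

lemma d_tendsto :
    Filter.Tendsto (fun n : ℕ => lam (n + 1) ^ 2 - lam n ^ 2) Filter.atTop (nhds 2) := by
  have hlow : Filter.Tendsto (fun n : ℕ => 2 - 1 / (n : ℝ)) Filter.atTop (nhds 2) := by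
    have := tendsto_one_div_atTop_nhds_zero_nat (𝕜 := ℝ)
    simpa using Filter.Tendsto.const_sub 2 this
  refine tendsto_of_tendsto_of_tendsto_of_le_of_le' hlow tendsto_const_nhds ?_ ?_
  · filter_upwards [Filter.eventually_ge_atTop 1] with n hn
    set a := lam n ^ 2 with ha
    have han : (n : ℝ) ≤ a := lam_sq_ge n
    have h1 : (1 : ℝ) ≤ a := le_trans (by exact_mod_cast hn) han
    have hapos : (0 : ℝ) < a := by linarith
    set u := 1 / a with hu_def
    have hu : a * u = 1 := mul_one_div_cancel (ne_of_gt hapos)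
    have hu0 : 0 < u := by positivity
    have hu1 : u ≤ 1 := by
      rw [hu_def]
      rw [div_le_one hapos]; exact h1
    have key : (a + 2 - 2 * u) ^ 2 ≤ a ^ 2 + 4 * a := by nlinarith
    have hsq : a + 2 - 2 * u ≤ Real.sqrt (a ^ 2 + 4 * a) := by
      have h' := Real.sqrt_le_sqrt key
      rwa [Real.sqrt_sq (by nlinarith)] at h'
    have hinv : u ≤ 1 / (n : ℝ) := by
      rw [hu_def]
      apply one_div_le_one_div_of_le
      · exact_mod_cast Nat.lt_of_lt_of_le Nat.zero_lt_one hn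
      · exact han
    rw [lam_sq_rec]
    show 2 - 1 / (n : ℝ) ≤ (a + 2 + Real.sqrt (a ^ 2 + 4 * a)) / 2 - a
    linarith
  · filter_upwards with n
    set a := lam n ^ 2 with ha
    have ha0 : 0 ≤ a := by positivity
    have hup : Real.sqrt (a ^ 2 + 4 * a) ≤ a + 2 := by
      have := Real.sqrt_le_sqrt (show a ^ 2 + 4 * a ≤ (a + 2) ^ 2 by nlinarith)
      rwa [Real.sqrt_sq (by linarith)] at this
    rw [lam_sq_rec]
    show (a + 2 + Real.sqrt (a ^ 2 + 4 * a)) / 2 - a ≤ 2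
    linarith

theorem stmt_7 :
    Filter.Tendsto (fun n : ℕ => lam n ^ 2 / n) Filter.atTop (nhds 2) := by
  have h := d_tendsto.cesaro
  refine h.congr fun n => ?_
  rw [Finset.sum_range_sub (fun i => lam i ^ 2)]
  simp [lam, div_eq_inv_mul]
end

section
/- Let f : (0,∞) → (0,∞) satisfy f(1) = 1, log(1/f) convex, and f(s) = f(s+1) - 1/f(s+1). Then for 0 < s ≤ 1 and n ≥ 2, λ_n (λ_{n+1}/λ_n)^s ≤ f(n+s) ≤ λ_n (λ_n/λ_{n-1})^s, where λ_n = f(n). -/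
theorem stmt_18 (f : ℝ → ℝ) (hpos : ∀ s : ℝ, 0 < s → 0 < f s) (h1 : f 1 = 1)
    (hconv : ConvexOn ℝ (Set.Ioi 0) fun s => Real.log (1 / f s))
    (hfe : ∀ s : ℝ, 0 < s → f s = f (s + 1) - 1 / f (s + 1)) :
    ∀ n : ℕ, 2 ≤ n → ∀ s : ℝ, 0 < s → s ≤ 1 →
      f n * (f (n + 1) / f n) ^ s ≤ f (n + s) ∧
        f (n + s) ≤ f n * (f n / f ((n : ℝ) - 1)) ^ s := by
  intro n hn s hs hs1
  have hn2 : (2 : ℝ) ≤ (n : ℝ) := by exact_mod_cast hn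
  have hnp : (0 : ℝ) < (n : ℝ) := by linarith
  have hn1p : (0 : ℝ) < (n : ℝ) + 1 := by linarith
  have hnm1p : (0 : ℝ) < (n : ℝ) - 1 := by linarith
  have hnsp : (0 : ℝ) < (n : ℝ) + s := by linarith
  have hA : 0 < f n := hpos _ hnp
  have hB : 0 < f ((n : ℝ) + 1) := hpos _ hn1p
  have hC : 0 < f ((n : ℝ) - 1) := hpos _ hnm1p
  have hD : 0 < f ((n : ℝ) + s) := hpos _ hnsp
  -- first inequality
  have key1 := hconv.2 (Set.mem_Ioi.mpr hnp) (Set.mem_Ioi.mpr hn1p)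
    (by linarith : (0:ℝ) ≤ 1 - s) hs.le (by ring)
  simp only [smul_eq_mul] at key1
  have e1 : (1 - s) * (n : ℝ) + s * ((n : ℝ) + 1) = (n : ℝ) + s := by ring
  rw [e1] at key1
  simp only [one_div, Real.log_inv] at key1
  -- second inequality
  have h1s : (0 : ℝ) < 1 + s := by linarith
  have key2 := hconv.2 (Set.mem_Ioi.mpr hnm1p) (Set.mem_Ioi.mpr hnsp)
    (by positivity : (0:ℝ) ≤ s / (1 + s)) (by positivity : (0:ℝ) ≤ 1 / (1 + s))
    (by field_simp; linarith)
  simp only [smul_eq_mul] at key2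
  have e2 : s / (1 + s) * ((n : ℝ) - 1) + 1 / (1 + s) * ((n : ℝ) + s) = (n : ℝ) := by
    field_simp; ring
  rw [e2] at key2
  simp only [one_div, Real.log_inv] at key2
  have key2' : Real.log (f ((n : ℝ) + s)) ≤
      (1 + s) * Real.log (f n) - s * Real.log (f ((n : ℝ) - 1)) := by
    have k := mul_le_mul_of_nonneg_right key2 h1s.le
    have e3 : (s / (1 + s) * -Real.log (f ((n : ℝ) - 1)) +
        (1 + s)⁻¹ * -Real.log (f ((n : ℝ) + s))) * (1 + s) =
        -(s * Real.log (f ((n : ℝ) - 1))) + -Real.log (f ((n : ℝ) + s)) := by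
      field_simp
    rw [e3] at k
    nlinarith [k]
  constructor
  · rw [← Real.log_le_log_iff (by positivity) hD, Real.log_mul (by positivity)
      (by positivity), Real.log_rpow (by positivity), Real.log_div hB.ne' hA.ne']
    linarith
  · rw [← Real.log_le_log_iff hD (by positivity), Real.log_mul (by positivity)
      (by positivity), Real.log_rpow (by positivity), Real.log_div hA.ne' hC.ne']
    linarith
end
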